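/- Let ξ = β and A1 = max{C3-(1-ξ)C0, C3-C2, ξC3} with C3-C2 < ξC3 and C3-(1-ξ)C0 ≤ ξC3, so A1 = ξC3, and let ξC3 < C1, λ = (1-ξ)/ξ. Define F(v) = min(C1, max(ξC3, C3 - λv)). Then for every v ∈ [0, C1], F(F(v)) = ξC3; i.e., F converges to its fixed point ξC3 in at most two steps. -/

import Mathlib

theorem poincare_finite_time_two_steps (C0 C1 C2 C3 ξ β lam A1 : ℝ)
    (hξ0 : 0 < ξ) (hξ1 : ξ < 1) (hξβ : ξ = β)
    (hA1 : A1 = max (max (C3 - (1 - ξ) * C0) (C3 - C2)) (ξ * C3))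
    (h1 : C3 - C2 < ξ * C3) (h2 : C3 - (1 - ξ) * C0 ≤ ξ * C3)
    (hA1eq : A1 = ξ * C3)
    (hfp : ξ * C3 < C1) (hlam : lam = (1 - ξ) / ξ)
    (F : ℝ → ℝ) (hF : ∀ v, F v = min C1 (max (ξ * C3) (C3 - lam * v))) :
    ∀ v ∈ Set.Icc (0 : ℝ) C1, F (F v) = ξ * C3 := by
  intro v _
  have hlam0 : 0 ≤ lam := by
    rw [hlam]; apply div_nonneg <;> linarith
  have hw : ξ * C3 ≤ F v := by
    rw [hF v]
    exact le_min hfp.le (le_max_left _ _)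
  have hkey : C3 - lam * F v ≤ ξ * C3 := by
    have hml : lam * (ξ * C3) ≤ lam * F v := mul_le_mul_of_nonneg_left hw hlam0
    have hle : lam * (ξ * C3) = (1 - ξ) * C3 := by
      rw [hlam]; field_simp
    nlinarith
  rw [hF (F v), max_eq_left hkey, min_eq_right hfp.le]
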